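/- Let P be an x-monotone polyomino and let c₁ < ⋯ < c_k be vertical cut positions such that for every minimum of the upper envelope of P and every maximum of the lower envelope of P, some c_i passes through it. Then every part of the decomposition of P obtained from these cuts is an orthogonally convex polyomino. -/

import Mathlib

/-- Two grid points are adjacent if they are at Euclidean distance 1. -/
def Adj (p q : ℤ × ℤ) : Prop := |p.1 - q.1| + |p.2 - q.2| = 1

/-- A set of grid points induces a connected grid graph. -/
def GridConnected (S : Set (ℤ × ℤ)) : Prop :=
  ∀ p ∈ S, ∀ q ∈ S,
    Relation.ReflTransGen (fun a b => a ∈ S ∧ b ∈ S ∧ Adj a b) p q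

/-- A polyomino: a finite nonempty set of grid points with connected grid graph. -/
def IsPolyomino (P : Finset (ℤ × ℤ)) : Prop :=
  P.Nonempty ∧ GridConnected ↑P

/-- x-monotone (column convex). -/
def ColumnConvex (S : Set (ℤ × ℤ)) : Prop :=
  ∀ x y₁ y₂ y : ℤ, (x, y₁) ∈ S → (x, y₂) ∈ S → y₁ ≤ y → y ≤ y₂ → (x, y) ∈ S

/-- y-monotone (row convex). -/
def RowConvex (S : Set (ℤ × ℤ)) : Prop :=
  ∀ y x₁ x₂ x : ℤ, (x₁, y) ∈ S → (x₂, y) ∈ S → x₁ ≤ x → x ≤ x₂ → (x, y) ∈ S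

/-- Orthogonally convex. -/
def OrthoConvex (S : Set (ℤ × ℤ)) : Prop := ColumnConvex S ∧ RowConvex S

/-- Simple (hole-free): the complement induces a connected grid graph. -/
def SimplePoly (P : Finset (ℤ × ℤ)) : Prop :=
  GridConnected ((↑P : Set (ℤ × ℤ))ᶜ)

/-- Left piece of the vertical cut at `c`. -/
def PLe (P : Finset (ℤ × ℤ)) (c : ℤ) : Finset (ℤ × ℤ) :=
  P.filter (fun p => p.1 ≤ c)

/-- Right piece of the vertical cut at `c`. -/
def PGt (P : Finset (ℤ × ℤ)) (c : ℤ) : Finset (ℤ × ℤ) :=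
  P.filter (fun p => c < p.1)

/-- Vertical straight 2-cut of `P` at position `c` into left piece `P₁` and right
piece `P₂`. -/
def IsVCut (P P₁ P₂ : Finset (ℤ × ℤ)) (c : ℤ) : Prop :=
  P₁ ∪ P₂ = P ∧ Disjoint P₁ P₂ ∧ P₁.Nonempty ∧ P₂.Nonempty ∧
  GridConnected ↑P₁ ∧ GridConnected ↑P₂ ∧
  ∀ p ∈ P₁, ∀ q ∈ P₂, Adj p q → p.1 = c ∧ q.1 = c + 1 ∧ p.2 = q.2

/-- Valid vertical straight 2-cut: the pieces can be pulled apart horizontally. -/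
def ValidVCut (P P₁ P₂ : Finset (ℤ × ℤ)) (c : ℤ) : Prop :=
  IsVCut P P₁ P₂ c ∧ ∀ k : ℤ, 1 ≤ k → ∀ p ∈ P₂, (p.1 + k, p.2) ∉ P₁

/-- Horizontal straight 2-cut of `P` at position `c` into bottom piece `P₁` and
top piece `P₂` (coordinates exchanged). -/
def IsHCut (P P₁ P₂ : Finset (ℤ × ℤ)) (c : ℤ) : Prop :=
  P₁ ∪ P₂ = P ∧ Disjoint P₁ P₂ ∧ P₁.Nonempty ∧ P₂.Nonempty ∧
  GridConnected ↑P₁ ∧ GridConnected ↑P₂ ∧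
  ∀ p ∈ P₁, ∀ q ∈ P₂, Adj p q → p.2 = c ∧ q.2 = c + 1 ∧ p.1 = q.1

/-- Valid horizontal straight 2-cut: the pieces can be pulled apart vertically. -/
def ValidHCut (P P₁ P₂ : Finset (ℤ × ℤ)) (c : ℤ) : Prop :=
  IsHCut P P₁ P₂ c ∧ ∀ k : ℤ, 1 ≤ k → ∀ p ∈ P₂, (p.1, p.2 + k) ∉ P₁

/-- The part of the decomposition of `P` by the vertical cut positions `C`
that contains the point `p`. -/
def CutPart (P : Finset (ℤ × ℤ)) (C : Finset ℤ) (p : ℤ × ℤ) : Finset (ℤ × ℤ) :=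
  P.filter (fun q => ∀ c ∈ C, (q.1 ≤ c ↔ p.1 ≤ c))

/-- The vertical cut positions `C` decompose `P` into orthogonally convex parts. -/
def Decomposes (P : Finset (ℤ × ℤ)) (C : Finset ℤ) : Prop :=
  ∀ p ∈ P, OrthoConvex ↑(CutPart P C p)

/-- The decomposition number `d(P)`: the minimum number of vertical cut positions
decomposing `P` into orthogonally convex parts. -/
noncomputable def decompNumber (P : Finset (ℤ × ℤ)) : ℕ :=
  sInf {k | ∃ C : Finset ℤ, C.card = k ∧ Decomposes P C}

/-- `(a, b, y₀)` is a minimum of the upper envelope of `P`. -/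
def UpperEnvMin (P : Set (ℤ × ℤ)) (a b y₀ : ℤ) : Prop :=
  a + 2 ≤ b ∧ (∀ x : ℤ, a ≤ x → x ≤ b → (x, y₀) ∈ P) ∧
  (a, y₀ + 1) ∈ P ∧ (b, y₀ + 1) ∈ P ∧ ∀ x : ℤ, a < x → x < b → (x, y₀ + 1) ∉ P

/-- `(a, b, y₀)` is a maximum of the lower envelope of `P`. -/
def LowerEnvMax (P : Set (ℤ × ℤ)) (a b y₀ : ℤ) : Prop :=
  a + 2 ≤ b ∧ (∀ x : ℤ, a ≤ x → x ≤ b → (x, y₀) ∈ P) ∧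
  (a, y₀ - 1) ∈ P ∧ (b, y₀ - 1) ∈ P ∧ ∀ x : ℤ, a < x → x < b → (x, y₀ - 1) ∉ P

/-- The four cells of the 2×2 square with lower-left corner `s`. -/
def SquareCells (s : ℤ × ℤ) : Finset (ℤ × ℤ) :=
  {s, (s.1 + 1, s.2), (s.1, s.2 + 1), (s.1 + 1, s.2 + 1)}

/-- A 2×2 square (given by its lower-left corner `s`) is a reflex witness of `P`
if it contains exactly three points of `P`. -/
def ReflexWitness (P : Finset (ℤ × ℤ)) (s : ℤ × ℤ) : Prop :=
  (SquareCells s ∩ P).card = 3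

/-- The number of reflex witnesses of `P`. -/
noncomputable def wRef (P : Finset (ℤ × ℤ)) : ℕ :=
  Set.ncard {s : ℤ × ℤ | ReflexWitness P s}

/-- A tile `t` is locally reflex: it is the corner tile of some reflex witness,
i.e. the square cell opposite to `t` is the one missing from `P`. -/
def LocallyReflex (P : Finset (ℤ × ℤ)) (t : ℤ × ℤ) : Prop :=
  ∃ s : ℤ × ℤ, ReflexWitness P s ∧ t ∈ SquareCells s ∧
    (2 * s.1 + 1 - t.1, 2 * s.2 + 1 - t.2) ∉ P

/-- The number of locally reflex tiles of `P`. -/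
noncomputable def rRef (P : Finset (ℤ × ℤ)) : ℕ :=
  Set.ncard {t : ℤ × ℤ | LocallyReflex P t}

/-- A tile `t` is locally convex: some 2×2 square contains `t` and no other
point of `P`. -/
def LocallyConvex (P : Finset (ℤ × ℤ)) (t : ℤ × ℤ) : Prop :=
  ∃ s : ℤ × ℤ, t ∈ SquareCells s ∧ SquareCells s ∩ P = {t}

/-- A straight 2-cut `(P₁, P₂)` is along a locally reflex tile of `P`. -/
def AlongReflex (P P₁ P₂ : Finset (ℤ × ℤ)) : Prop :=
  ∃ s : ℤ × ℤ, ReflexWitness P s ∧ (SquareCells s ∩ P₁).Nonempty ∧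
    (SquareCells s ∩ P₂).Nonempty

/-- A valid (not necessarily straight) 2-cut of `P` into `P₁` and `P₂`. -/
def ValidCut (P P₁ P₂ : Finset (ℤ × ℤ)) : Prop :=
  P₁ ∪ P₂ = P ∧ Disjoint P₁ P₂ ∧ P₁.Nonempty ∧ P₂.Nonempty ∧
  GridConnected ↑P₁ ∧ GridConnected ↑P₂ ∧
  ∃ v ∈ ({(1, 0), (-1, 0), (0, 1), (0, -1)} : Set (ℤ × ℤ)),
    ∀ k : ℤ, 1 ≤ k → ∀ p ∈ P₂, (p.1 + k * v.1, p.2 + k * v.2) ∉ P₁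

/-- A polyomino is 2-cuttable: it is orthogonally convex, or some valid 2-cut
splits it into two 2-cuttable polyominoes. -/
inductive TwoCuttable : Finset (ℤ × ℤ) → Prop
  | convex (P : Finset (ℤ × ℤ)) : IsPolyomino P → OrthoConvex ↑P → TwoCuttable P
  | cut (P P₁ P₂ : Finset (ℤ × ℤ)) : ValidCut P P₁ P₂ →
      TwoCuttable P₁ → TwoCuttable P₂ → TwoCuttable P

/-- A polyomino is straight 2-cuttable: it is orthogonally convex, or some valid
vertical or horizontal straight 2-cut splits it into two straight 2-cuttable
polyominoes. -/
inductive Straight2Cuttable : Finset (ℤ × ℤ) → Prop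
  | convex (P : Finset (ℤ × ℤ)) : IsPolyomino P → OrthoConvex ↑P → Straight2Cuttable P
  | vcut (P P₁ P₂ : Finset (ℤ × ℤ)) (c : ℤ) : ValidVCut P P₁ P₂ c →
      Straight2Cuttable P₁ → Straight2Cuttable P₂ → Straight2Cuttable P
  | hcut (P P₁ P₂ : Finset (ℤ × ℤ)) (c : ℤ) : ValidHCut P P₁ P₂ c →
      Straight2Cuttable P₁ → Straight2Cuttable P₂ → Straight2Cuttable P

section StmtTwoAux

private lemma adj_symm' {p q : ℤ × ℤ} (h : Adj p q) : Adj q p := by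
  unfold Adj at *; rw [abs_sub_comm q.1 p.1, abs_sub_comm q.2 p.2]; exact h

private lemma reach_symm' {S : Set (ℤ × ℤ)} :
    Symmetric (Relation.ReflTransGen (fun a b => a ∈ S ∧ b ∈ S ∧ Adj a b)) :=
  @Relation.ReflTransGen.symmetric _ _ ⟨fun _ _ h => ⟨h.2.1, h.1, adj_symm' h.2.2⟩⟩ |>.symm

private lemma reach_vert' {S : Set (ℤ × ℤ)} (hS : ColumnConvex S) (x y₁ y₂ : ℤ)
    (h₁ : (x, y₁) ∈ S) (h₂ : (x, y₂) ∈ S) :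
    Relation.ReflTransGen (fun a b => a ∈ S ∧ b ∈ S ∧ Adj a b) (x, y₁) (x, y₂) := by
  have key : ∀ n : ℕ, ∀ z₁ z₂ : ℤ, z₂ = z₁ + n → (x, z₁) ∈ S → (x, z₂) ∈ S →
      Relation.ReflTransGen (fun a b => a ∈ S ∧ b ∈ S ∧ Adj a b) (x, z₁) (x, z₂) := by
    intro n
    induction n with
    | zero => intro z₁ z₂ h hh1 hh2
              have : z₂ = z₁ := by omega
              subst this; exact Relation.ReflTransGen.refl
    | succ k ih =>
      intro z₁ z₂ h hh1 hh2
      have hm : (x, z₁ + k) ∈ S := hS x z₁ z₂ _ hh1 hh2 (by omega) (by omega)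
      refine Relation.ReflTransGen.tail (ih z₁ (z₁ + k) rfl hh1 hm) ⟨hm, hh2, ?_⟩
      unfold Adj
      have e1 : (x : ℤ) - x = 0 := by ring
      have e2 : (z₁ + (k : ℤ)) - z₂ = -1 := by omega
      simp only [e1, e2, abs_zero, abs_neg, abs_one, zero_add]
  rcases le_total y₁ y₂ with h | h
  · exact key (y₂ - y₁).toNat y₁ y₂ (by omega) h₁ h₂
  · exact reach_symm' (key (y₁ - y₂).toNat y₂ y₁ (by omega) h₂ h₁)

private lemma crossing' {S : Set (ℤ × ℤ)} {p q : ℤ × ℤ}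
    (h : Relation.ReflTransGen (fun a b => a ∈ S ∧ b ∈ S ∧ Adj a b) p q)
    (c : ℤ) (hp : p.1 ≤ c) (hq : c < q.1) :
    ∃ h' : ℤ, (c, h') ∈ S ∧ (c + 1, h') ∈ S := by
  revert hq
  induction h with
  | refl => intro hq; omega
  | @tail b q hpb hbq ih =>
    intro hq
    by_cases hb : c < b.1
    · exact ih hb
    · push_neg at hb
      obtain ⟨hbS, hqS, hadj⟩ := hbq
      unfold Adj at hadj
      rw [Int.abs_eq_natAbs, Int.abs_eq_natAbs] at hadj
      have h1 : b.1 = c ∧ q.1 = c + 1 ∧ b.2 = q.2 := by omega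
      refine ⟨b.2, ?_, ?_⟩
      · have e : (c, b.2) = b := by rw [← h1.1]
        rw [e]; exact hbS
      · have e : (c + 1, b.2) = q := by rw [h1.2.2, ← h1.2.1]
        rw [e]; exact hqS

private lemma exists_bot' (P : Finset (ℤ × ℤ)) (x h0 : ℤ) (h : (x, h0) ∈ P) :
    ∃ h₁ : ℤ, (x, h₁) ∈ P ∧ (x, h₁ - 1) ∉ P ∧ ∀ h' : ℤ, (x, h') ∈ P → h₁ ≤ h' := by
  classical
  set col := (P.filter (fun q => q.1 = x)).image Prod.snd with hcol
  have hmemcol : ∀ t : ℤ, t ∈ col ↔ (x, t) ∈ P := by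
    intro t
    simp only [hcol, Finset.mem_image, Finset.mem_filter]
    constructor
    · rintro ⟨q, ⟨hm, hx⟩, hv⟩
      rw [← hx, ← hv]
      simpa using hm
    · intro ht; exact ⟨(x, t), ⟨ht, rfl⟩, rfl⟩
  have hne : col.Nonempty := ⟨h0, (hmemcol h0).mpr h⟩
  refine ⟨col.min' hne, (hmemcol _).mp (col.min'_mem hne), ?_, ?_⟩
  · intro hc
    have := col.min'_le _ ((hmemcol _).mpr hc)
    omega
  · intro h' hh'
    exact col.min'_le _ ((hmemcol _).mpr hh')
private lemma key_lower (P : Finset (ℤ × ℤ)) (hmono : ColumnConvex ↑P) (a b y : ℤ)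
    (hab : a + 2 ≤ b) (ha : (a, y) ∈ P) (hb : (b, y) ∈ P)
    (hover : ∀ x : ℤ, a ≤ x → x < b → ∃ h : ℤ, (x, h) ∈ P ∧ (x + 1, h) ∈ P)
    (habove : ∀ x y' : ℤ, a < x → x < b → (x, y') ∈ P → y < y') :
    ∃ a' b' y₀ : ℤ, LowerEnvMax ↑P a' b' y₀ ∧ a ≤ a' ∧ b' ≤ b := by
  classical
  have hmonoP : ∀ x u v w : ℤ, (x, u) ∈ P → (x, v) ∈ P → u ≤ w → w ≤ v → (x, w) ∈ P := by
    intro x u v w hu hv h1 h2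
    exact hmono x u v w hu hv h1 h2
  have hbotmin : ∀ x h h' : ℤ, (x, h) ∈ P → (x, h - 1) ∉ P → (x, h') ∈ P → h ≤ h' := by
    intro x h h' hh hh1 hh'
    by_contra hlt
    exact hh1 (hmonoP x h' h (h - 1) hh' hh (by omega) (by omega))
  -- the set of bottom values of interior columns
  set D := (P.filter (fun q => a < q.1 ∧ q.1 < b ∧ (q.1, q.2 - 1) ∉ P)).image Prod.snd with hD
  have hmemD : ∀ t : ℤ, t ∈ D ↔ ∃ x : ℤ, a < x ∧ x < b ∧ (x, t) ∈ P ∧ (x, t - 1) ∉ P := by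
    intro t
    simp only [hD, Finset.mem_image, Finset.mem_filter]
    constructor
    · rintro ⟨q, ⟨hm, hx1, hx2, hx3⟩, hv⟩
      refine ⟨q.1, hx1, hx2, ?_, ?_⟩
      · rw [← hv]; simpa using hm
      · rw [← hv]; exact hx3
    · rintro ⟨x, hx1, hx2, hm, hm2⟩
      exact ⟨(x, t), ⟨hm, hx1, hx2, hm2⟩, rfl⟩
  have hDne : D.Nonempty := by
    obtain ⟨h, hh1, hh2⟩ := hover a (le_refl a) (by omega)
    obtain ⟨h₁, hm1, hm2, _⟩ := exists_bot' P (a + 1) h hh2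
    exact ⟨h₁, (hmemD h₁).mpr ⟨a + 1, by omega, by omega, hm1, hm2⟩⟩
  set y₀ := D.max' hDne with hy₀def
  obtain ⟨m, hm1, hm2, hmmem, hmbot⟩ := (hmemD y₀).mp (D.max'_mem hDne)
  have hyy₀ : y < y₀ := habove m y₀ hm1 hm2 hmmem
  have hDmax : ∀ x h : ℤ, a < x → x < b → (x, h) ∈ P → (x, h - 1) ∉ P → h ≤ y₀ := by
    intro x h h1 h2 h3 h4
    exact D.le_max' h ((hmemD h).mpr ⟨x, h1, h2, h3, h4⟩)
  -- left boundary a'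
  have hAne : ((Finset.Icc a (m - 1)).filter
      (fun x => ∃ h : ℤ, (x, h) ∈ P ∧ (x, h - 1) ∉ P ∧ h < y₀)).Nonempty := by
    obtain ⟨h₁, hp1, hp2, hp3⟩ := exists_bot' P a y ha
    refine ⟨a, ?_⟩
    rw [Finset.mem_filter, Finset.mem_Icc]
    exact ⟨⟨le_refl a, by omega⟩, h₁, hp1, hp2, by have := hp3 y ha; omega⟩
  set a' := ((Finset.Icc a (m - 1)).filter
      (fun x => ∃ h : ℤ, (x, h) ∈ P ∧ (x, h - 1) ∉ P ∧ h < y₀)).max' hAne with ha'def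
  have ha'mem : a' ∈ (Finset.Icc a (m - 1)).filter
      (fun x => ∃ h : ℤ, (x, h) ∈ P ∧ (x, h - 1) ∉ P ∧ h < y₀) := Finset.max'_mem _ hAne
  have ha'max : ∀ x ∈ (Finset.Icc a (m - 1)).filter
      (fun x => ∃ h : ℤ, (x, h) ∈ P ∧ (x, h - 1) ∉ P ∧ h < y₀), x ≤ a' :=
    fun x hx => Finset.le_max' _ x hx
  rw [Finset.mem_filter, Finset.mem_Icc] at ha'mem
  obtain ⟨⟨haa', ha'm⟩, hA1, hAmem, hAnot, hAlt⟩ := ha'mem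
  -- right boundary b'
  have hBne : ((Finset.Icc (m + 1) b).filter
      (fun x => ∃ h : ℤ, (x, h) ∈ P ∧ (x, h - 1) ∉ P ∧ h < y₀)).Nonempty := by
    obtain ⟨h₁, hp1, hp2, hp3⟩ := exists_bot' P b y hb
    refine ⟨b, ?_⟩
    rw [Finset.mem_filter, Finset.mem_Icc]
    exact ⟨⟨by omega, le_refl b⟩, h₁, hp1, hp2, by have := hp3 y hb; omega⟩
  set b' := ((Finset.Icc (m + 1) b).filter
      (fun x => ∃ h : ℤ, (x, h) ∈ P ∧ (x, h - 1) ∉ P ∧ h < y₀)).min' hBne with hb'def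
  have hb'mem : b' ∈ (Finset.Icc (m + 1) b).filter
      (fun x => ∃ h : ℤ, (x, h) ∈ P ∧ (x, h - 1) ∉ P ∧ h < y₀) := Finset.min'_mem _ hBne
  have hb'min : ∀ x ∈ (Finset.Icc (m + 1) b).filter
      (fun x => ∃ h : ℤ, (x, h) ∈ P ∧ (x, h - 1) ∉ P ∧ h < y₀), b' ≤ x :=
    fun x hx => Finset.min'_le _ x hx
  rw [Finset.mem_filter, Finset.mem_Icc] at hb'mem
  obtain ⟨⟨hmb', hb'b⟩, hB1, hBmem, hBnot, hBlt⟩ := hb'mem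
  -- between a' and b' every column has bottom y₀
  have hbetween : ∀ x : ℤ, a' < x → x < b' → (x, y₀) ∈ P ∧ (x, y₀ - 1) ∉ P := by
    intro x hx1 hx2
    have hi1 : a < x := by omega
    have hi2 : x < b := by omega
    obtain ⟨h, hh1, _⟩ := hover x (by omega) hi2
    obtain ⟨h₁, hq1, hq2, hq3⟩ := exists_bot' P x h hh1
    have hle : h₁ ≤ y₀ := hDmax x h₁ hi1 hi2 hq1 hq2
    have heq : h₁ = y₀ := by
      by_contra hne
      have hlt : h₁ < y₀ := by omega
      rcases lt_trichotomy x m with hc | hc | hc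
      · have hxA : x ∈ (Finset.Icc a (m - 1)).filter
            (fun x => ∃ h : ℤ, (x, h) ∈ P ∧ (x, h - 1) ∉ P ∧ h < y₀) := by
          rw [Finset.mem_filter, Finset.mem_Icc]
          exact ⟨⟨by omega, by omega⟩, h₁, hq1, hq2, hlt⟩
        have := ha'max x hxA
        omega
      · subst hc
        have := hbotmin x y₀ h₁ hmmem hmbot hq1
        omega
      · have hxB : x ∈ (Finset.Icc (m + 1) b).filter
            (fun x => ∃ h : ℤ, (x, h) ∈ P ∧ (x, h - 1) ∉ P ∧ h < y₀) := by
          rw [Finset.mem_filter, Finset.mem_Icc]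
          exact ⟨⟨by omega, by omega⟩, h₁, hq1, hq2, hlt⟩
        have := hb'min x hxB
        omega
    subst heq
    exact ⟨hq1, hq2⟩
  -- endpoint a'
  have ha'top : (a', y₀) ∈ P := by
    obtain ⟨h, hh1, hh2⟩ := hover a' haa' (by omega)
    have hnext := hbetween (a' + 1) (by omega) (by omega)
    have hyh : y₀ ≤ h := hbotmin (a' + 1) y₀ h hnext.1 hnext.2 hh2
    exact hmonoP a' hA1 h y₀ hAmem hh1 (by omega) hyh
  have ha'low : (a', y₀ - 1) ∈ P := hmonoP a' hA1 y₀ (y₀ - 1) hAmem ha'top (by omega) (by omega)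
  -- endpoint b'
  have hb'top : (b', y₀) ∈ P := by
    obtain ⟨h, hh1, hh2⟩ := hover (b' - 1) (by omega) (by omega)
    have hprev := hbetween (b' - 1) (by omega) (by omega)
    have hyh : y₀ ≤ h := hbotmin (b' - 1) y₀ h hprev.1 hprev.2 hh1
    have : (b' - 1 + 1, h) ∈ P := hh2
    rw [show b' - 1 + 1 = b' by ring] at this
    exact hmonoP b' hB1 h y₀ hBmem this (by omega) hyh
  have hb'low : (b', y₀ - 1) ∈ P := hmonoP b' hB1 y₀ (y₀ - 1) hBmem hb'top (by omega) (by omega)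
  refine ⟨a', b', y₀, ⟨by omega, ?_, ha'low, hb'low, ?_⟩, haa', hb'b⟩
  · intro x hx1 hx2
    rcases eq_or_lt_of_le hx1 with rfl | hlt1
    · exact ha'top
    rcases eq_or_lt_of_le hx2 with rfl | hlt2
    · exact hb'top
    exact (hbetween x hlt1 hlt2).1
  · intro x hx1 hx2
    exact (hbetween x hx1 hx2).2
private lemma same_side_above' (P : Finset (ℤ × ℤ)) (hmono : ColumnConvex ↑P) (a b y : ℤ)
    (hgap : ∀ x : ℤ, a < x → x < b → (x, y) ∉ P)
    (hover : ∀ x : ℤ, a ≤ x → x < b → ∃ h : ℤ, (x, h) ∈ P ∧ (x + 1, h) ∈ P)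
    (h0 : ℤ) (h0mem : (a + 1, h0) ∈ P) (h0y : y < h0) :
    ∀ x y' : ℤ, a < x → x < b → (x, y') ∈ P → y < y' := by
  have dich : ∀ x u v : ℤ, a < x → x < b → (x, u) ∈ P → (x, v) ∈ P → y < u → y < v := by
    intro x u v hx1 hx2 hu hv hyu
    by_contra hyv
    push_neg at hyv
    have : (x, y) ∈ (↑P : Set (ℤ × ℤ)) := hmono x v u y hv hu hyv (le_of_lt hyu)
    exact hgap x hx1 hx2 this
  have main : ∀ n : ℕ, ∀ x y' : ℤ, x = a + 1 + (n : ℤ) → x < b → (x, y') ∈ P → y < y' := by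
    intro n
    induction n with
    | zero =>
      intro x y' hx hxb hmem
      have hxe : x = a + 1 := by omega
      subst hxe
      exact dich (a + 1) h0 y' (by omega) hxb h0mem hmem h0y
    | succ k ih =>
      intro x y' hx hxb hmem
      obtain ⟨h, hh1, hh2⟩ := hover (x - 1) (by omega) (by omega)
      have hyh : y < h := ih (x - 1) h (by omega) (by omega) hh1
      rw [show x - 1 + 1 = x by ring] at hh2
      exact dich x h y' (by omega) hxb hh2 hmem hyh
  intro x y' hx1 hx2 hmem
  exact main (x - (a + 1)).toNat x y' (by omega) hx2 hmem

private def reflY : ℤ × ℤ → ℤ × ℤ := fun q => (q.1, -q.2)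

private lemma mem_reflY (P : Finset (ℤ × ℤ)) (x h : ℤ) :
    (x, h) ∈ P.image reflY ↔ (x, -h) ∈ P := by
  simp only [Finset.mem_image, reflY]
  constructor
  · rintro ⟨⟨u, v⟩, hm, he⟩
    simp only [Prod.mk.injEq] at he
    have h1 : u = x := he.1
    have h2 : v = -h := by omega
    subst h1; subst h2; exact hm
  · intro hm
    exact ⟨(x, -h), hm, by simp⟩

private lemma columnConvex_reflY (P : Finset (ℤ × ℤ)) (h : ColumnConvex ↑P) :
    ColumnConvex ↑(P.image reflY) := by
  intro x y₁ y₂ y h1 h2 l1 l2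
  rw [Finset.mem_coe, mem_reflY] at h1 h2 ⊢
  exact h x (-y₂) (-y₁) (-y) h2 h1 (by omega) (by omega)

private lemma lowerEnvMax_reflY (P : Finset (ℤ × ℤ)) (a b y₀ : ℤ)
    (h : LowerEnvMax ↑(P.image reflY) a b y₀) : UpperEnvMin ↑P a b (-y₀) := by
  obtain ⟨h1, h2, h3, h4, h5⟩ := h
  refine ⟨h1, ?_, ?_, ?_, ?_⟩
  · intro x hx1 hx2
    have := h2 x hx1 hx2
    rw [Finset.mem_coe, mem_reflY] at this
    exact this
  · rw [Finset.mem_coe, mem_reflY] at h3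
    rw [show -y₀ + 1 = -(y₀ - 1) by ring]
    exact h3
  · rw [Finset.mem_coe, mem_reflY] at h4
    rw [show -y₀ + 1 = -(y₀ - 1) by ring]
    exact h4
  · intro x hx1 hx2 hmem
    apply h5 x hx1 hx2
    rw [Finset.mem_coe, mem_reflY]
    rw [show -(y₀ - 1) = -y₀ + 1 by ring]
    exact hmem

end StmtTwoAux

/-- If vertical cut positions `C` pass through every minimum of the
upper envelope and every maximum of the lower envelope of an x-monotone polyomino
`P`, then every part of the resulting decomposition is an orthogonally convex
polyomino. -/
theorem stmt2 (P : Finset (ℤ × ℤ)) (C : Finset ℤ)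
    (hP : IsPolyomino P) (hmono : ColumnConvex ↑P)
    (hup : ∀ a b y₀ : ℤ, UpperEnvMin ↑P a b y₀ → ∃ c ∈ C, a ≤ c ∧ c < b)
    (hlo : ∀ a b y₀ : ℤ, LowerEnvMax ↑P a b y₀ → ∃ c ∈ C, a ≤ c ∧ c < b) :
    ∀ p ∈ P, IsPolyomino (CutPart P C p) ∧ OrthoConvex ↑(CutPart P C p) := by
    classical
  intro p hp
  have hQmem : ∀ q : ℤ × ℤ, q ∈ CutPart P C p ↔ q ∈ P ∧ ∀ c ∈ C, (q.1 ≤ c ↔ p.1 ≤ c) :=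
    fun q => Finset.mem_filter
  have hside : ∀ x₁ x₂ x : ℤ, (∀ c ∈ C, (x₁ ≤ c ↔ p.1 ≤ c)) → (∀ c ∈ C, (x₂ ≤ c ↔ p.1 ≤ c)) →
      x₁ ≤ x → x ≤ x₂ → ∀ c ∈ C, (x ≤ c ↔ p.1 ≤ c) := by
    intro x₁ x₂ x h1 h2 l1 l2 c hc
    have := h1 c hc; have := h2 c hc; omega
  have hnocut : ∀ x₁ x₂ : ℤ, (∀ c ∈ C, (x₁ ≤ c ↔ p.1 ≤ c)) → (∀ c ∈ C, (x₂ ≤ c ↔ p.1 ≤ c)) →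
      ∀ c ∈ C, ¬(x₁ ≤ c ∧ c < x₂) := by
    intro x₁ x₂ h1 h2 c hc hcon
    have := h1 c hc; have := h2 c hc; omega
  -- column convexity of the part
  have hcol : ColumnConvex ↑(CutPart P C p) := by
    intro x y₁ y₂ y h1 h2 l1 l2
    rw [Finset.mem_coe, hQmem] at h1 h2 ⊢
    exact ⟨hmono x y₁ y₂ y h1.1 h2.1 l1 l2, h1.2⟩
  -- row convexity of the part
  have hrow : RowConvex ↑(CutPart P C p) := by
    intro y x₁ x₂ x h1 h2 hx1 hx2
    rw [Finset.mem_coe, hQmem] at h1 h2 ⊢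
    refine ⟨?_, hside x₁ x₂ x h1.2 h2.2 hx1 hx2⟩
    by_contra hxy
    -- a : last point of row y in P weakly left of x
    have hAne : ((Finset.Icc x₁ x).filter (fun x' => (x', y) ∈ P)).Nonempty :=
      ⟨x₁, by rw [Finset.mem_filter, Finset.mem_Icc]; exact ⟨⟨le_refl _, hx1⟩, h1.1⟩⟩
    set a := ((Finset.Icc x₁ x).filter (fun x' => (x', y) ∈ P)).max' hAne with hadef
    have hamem : a ∈ (Finset.Icc x₁ x).filter (fun x' => (x', y) ∈ P) :=
      Finset.max'_mem _ hAne
    have hamax : ∀ x' ∈ (Finset.Icc x₁ x).filter (fun x' => (x', y) ∈ P), x' ≤ a :=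
      fun x' hx' => Finset.le_max' _ x' hx'
    rw [Finset.mem_filter, Finset.mem_Icc] at hamem
    obtain ⟨⟨hx₁a, hax⟩, haP⟩ := hamem
    have haxlt : a < x := lt_of_le_of_ne hax (fun he => hxy (he ▸ haP))
    -- b : first point of row y in P weakly right of x
    have hBne : ((Finset.Icc x x₂).filter (fun x' => (x', y) ∈ P)).Nonempty :=
      ⟨x₂, by rw [Finset.mem_filter, Finset.mem_Icc]; exact ⟨⟨hx2, le_refl _⟩, h2.1⟩⟩
    set b := ((Finset.Icc x x₂).filter (fun x' => (x', y) ∈ P)).min' hBne with hbdef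
    have hbmem : b ∈ (Finset.Icc x x₂).filter (fun x' => (x', y) ∈ P) :=
      Finset.min'_mem _ hBne
    have hbmin : ∀ x' ∈ (Finset.Icc x x₂).filter (fun x' => (x', y) ∈ P), b ≤ x' :=
      fun x' hx' => Finset.min'_le _ x' hx'
    rw [Finset.mem_filter, Finset.mem_Icc] at hbmem
    obtain ⟨⟨hxb, hbx₂⟩, hbP⟩ := hbmem
    have hxblt : x < b := lt_of_le_of_ne hxb (fun he => hxy (he ▸ hbP))
    have hab : a + 2 ≤ b := by omega
    -- the row y is empty strictly between a and b
    have hgap : ∀ x' : ℤ, a < x' → x' < b → (x', y) ∉ P := by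
      intro x' hl hr hmem
      rcases le_or_gt x' x with hc | hc
      · have hx'A : x' ∈ (Finset.Icc x₁ x).filter (fun x' => (x', y) ∈ P) := by
          rw [Finset.mem_filter, Finset.mem_Icc]; exact ⟨⟨by omega, hc⟩, hmem⟩
        have := hamax x' hx'A; omega
      · have hx'B : x' ∈ (Finset.Icc x x₂).filter (fun x' => (x', y) ∈ P) := by
          rw [Finset.mem_filter, Finset.mem_Icc]; exact ⟨⟨le_of_lt hc, by omega⟩, hmem⟩
        have := hbmin x' hx'B; omega
    -- consecutive columns of P overlap between a and b
    have hover : ∀ x' : ℤ, a ≤ x' → x' < b → ∃ h : ℤ, (x', h) ∈ P ∧ (x' + 1, h) ∈ P := by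
      intro x' hl hr
      have hpath := hP.2 (a, y) haP (b, y) hbP
      exact crossing' hpath x' hl hr
    obtain ⟨h0, hh0a, hh0⟩ := hover a (le_refl a) (by omega)
    have h0ne : h0 ≠ y := fun he => hgap (a + 1) (by omega) (by omega) (he ▸ hh0)
    rcases lt_or_gt_of_ne h0ne with hl0 | hg0
    · -- all interior columns lie below row y : reflect and find an upper envelope minimum
      have hmono' := columnConvex_reflY P hmono
      have ha' : (a, -y) ∈ P.image reflY := by rw [mem_reflY, neg_neg]; exact haP
      have hb' : (b, -y) ∈ P.image reflY := by rw [mem_reflY, neg_neg]; exact hbP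
      have hover' : ∀ x' : ℤ, a ≤ x' → x' < b →
          ∃ h : ℤ, (x', h) ∈ P.image reflY ∧ (x' + 1, h) ∈ P.image reflY := by
        intro x' hl hr
        obtain ⟨h, hh1, hh2⟩ := hover x' hl hr
        exact ⟨-h, by rw [mem_reflY, neg_neg]; exact hh1, by rw [mem_reflY, neg_neg]; exact hh2⟩
      have hgap' : ∀ x' : ℤ, a < x' → x' < b → (x', -y) ∉ P.image reflY := by
        intro x' hl hr hm
        rw [mem_reflY, neg_neg] at hm
        exact hgap x' hl hr hm
      have hh0' : (a + 1, -h0) ∈ P.image reflY := by rw [mem_reflY, neg_neg]; exact hh0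
      have habove' := same_side_above' (P.image reflY) hmono' a b (-y) hgap' hover'
        (-h0) hh0' (by omega)
      obtain ⟨a', b', y₀, hmax, hle1, hle2⟩ :=
        key_lower (P.image reflY) hmono' a b (-y) hab ha' hb' hover' habove'
      have hupmin := lowerEnvMax_reflY P a' b' y₀ hmax
      obtain ⟨c, hcC, hc1, hc2⟩ := hup a' b' (-y₀) hupmin
      exact hnocut x₁ x₂ h1.2 h2.2 c hcC ⟨by omega, by omega⟩
    · -- all interior columns lie above row y : find a lower envelope maximum
      have habove := same_side_above' P hmono a b y hgap hover h0 hh0 hg0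
      obtain ⟨a', b', y₀, hmax, hle1, hle2⟩ :=
        key_lower P hmono a b y hab haP hbP hover habove
      obtain ⟨c, hcC, hc1, hc2⟩ := hlo a' b' y₀ hmax
      exact hnocut x₁ x₂ h1.2 h2.2 c hcC ⟨by omega, by omega⟩
  -- connectivity of the part
  have hQconn : GridConnected ↑(CutPart P C p) := by
    have hreach : ∀ n : ℕ, ∀ q r : ℤ × ℤ, q ∈ CutPart P C p → r ∈ CutPart P C p →
        r.1 = q.1 + n →
        Relation.ReflTransGen
          (fun s t => s ∈ (↑(CutPart P C p) : Set (ℤ × ℤ)) ∧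
            t ∈ (↑(CutPart P C p) : Set (ℤ × ℤ)) ∧ Adj s t) q r := by
      intro n
      induction n with
      | zero =>
        rintro ⟨qx, qy⟩ ⟨rx, ry⟩ hq hr he
        have hx : rx = qx := by simpa using he
        subst hx
        exact reach_vert' hcol rx qy ry hq hr
      | succ k ih =>
        rintro ⟨qx, qy⟩ ⟨rx, ry⟩ hq hr he
        have he' : rx = qx + (k + 1 : ℤ) := by
          have : rx = qx + ((k : ℤ) + 1) := by exact_mod_cast he
          omega
        have hqP : (qx, qy) ∈ P := ((hQmem _).mp hq).1
        have hrP : (rx, ry) ∈ P := ((hQmem _).mp hr).1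
        have hpath := hP.2 (qx, qy) hqP (rx, ry) hrP
        obtain ⟨h, hh1, hh2⟩ := crossing' hpath qx (le_refl qx) (by omega)
        have hs1 : (qx, h) ∈ CutPart P C p :=
          (hQmem _).mpr ⟨hh1, ((hQmem _).mp hq).2⟩
        have hs2 : (qx + 1, h) ∈ CutPart P C p :=
          (hQmem _).mpr ⟨hh2, hside qx rx (qx + 1) ((hQmem _).mp hq).2
            ((hQmem _).mp hr).2 (by omega) (by omega)⟩
        refine Relation.ReflTransGen.trans (reach_vert' hcol qx qy h hq hs1) ?_
        refine Relation.ReflTransGen.trans (Relation.ReflTransGen.single ⟨hs1, hs2, ?_⟩) ?_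
        · unfold Adj
          have e1 : (qx : ℤ) - (qx + 1) = -1 := by ring
          have e2 : (h : ℤ) - h = 0 := by ring
          simp only [e1, e2, abs_neg, abs_one, abs_zero, add_zero]
        · exact ih (qx + 1, h) (rx, ry) hs2 hr (by omega)
    intro q hq r hr
    rcases le_total q.1 r.1 with h | h
    · exact hreach (r.1 - q.1).toNat q r hq hr (by omega)
    · exact reach_symm' (hreach (q.1 - r.1).toNat r q hr hq (by omega))
  have hpQ : p ∈ CutPart P C p := (hQmem p).mpr ⟨hp, fun c _ => Iff.rfl⟩
  exact ⟨⟨⟨p, hpQ⟩, hQconn⟩, hcol, hrow⟩
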